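/- For all real numbers a, t, p, setting P = (p-at)/√(1+a²) and Q = (t+ap)/√(1+a²), one has ∫_{-∞}^{t} φ(a(s-t)+p)·φ(s)·(s-t) ds = −(φ(P)·(φ(Q) + Q·Φ(Q)))/(1+a²). -/

import Mathlib

open Real MeasureTheory Set Filter

noncomputable def phi (s : ℝ) : ℝ := Real.exp (-s ^ 2 / 2) / Real.sqrt (2 * Real.pi)

noncomputable def Phi (t : ℝ) : ℝ := ∫ s in Set.Iic t, phi s

lemma phi_eq (s : ℝ) : phi s = (Real.sqrt (2 * Real.pi))⁻¹ * Real.exp (-(1/2) * s ^ 2) := by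
  unfold phi; rw [mul_comm]; ring_nf

lemma integrable_phi : Integrable phi := by
  have := (integrable_exp_neg_mul_sq (by norm_num : (0:ℝ) < 1/2)).const_mul
    (Real.sqrt (2 * Real.pi))⁻¹
  refine this.congr ?_
  filter_upwards with s
  rw [phi_eq]

lemma integrable_mul_phi : Integrable (fun v => v * phi v) := by
  have := (integrable_mul_exp_neg_mul_sq (by norm_num : (0:ℝ) < 1/2)).mul_const
    (Real.sqrt (2 * Real.pi))⁻¹
  refine this.congr ?_
  filter_upwards with s
  rw [phi_eq]; ring

lemma hasDerivAt_neg_phi (v : ℝ) : HasDerivAt (fun x => -phi x) (v * phi v) v := by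
  have h : HasDerivAt (fun x : ℝ => -x ^ 2 / 2) (-v) v := by
    have := (hasDerivAt_pow 2 v).neg.div_const 2
    refine this.congr_deriv ?_
    norm_num
    ring
  have h2 := (h.exp.div_const (Real.sqrt (2 * Real.pi))).neg
  have h3 : v * phi v = -(Real.exp (-v ^ 2 / 2) * -v / Real.sqrt (2 * Real.pi)) := by
    unfold phi; ring
  rw [h3]
  exact h2

lemma tendsto_neg_phi_atBot : Tendsto (fun v => -phi v) atBot (nhds 0) := by
  have h0 : Tendsto (fun v : ℝ => v ^ 2) atBot atTop := by
    have h : Tendsto (fun v : ℝ => -v) atBot atTop := tendsto_neg_atBot_atTop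
    have := (tendsto_pow_atTop (n := 2) (by norm_num)).comp h
    refine this.congr fun v => ?_
    simp [neg_sq]
  have h1 : Tendsto (fun v : ℝ => -v ^ 2 / 2) atBot atBot := by
    refine Tendsto.atBot_div_const two_pos ?_
    exact tendsto_neg_atTop_atBot.comp h0
  have h2 : Tendsto (fun v : ℝ => Real.exp (-v ^ 2 / 2)) atBot (nhds 0) :=
    Real.tendsto_exp_atBot.comp h1
  have h3 := (h2.div_const (Real.sqrt (2 * Real.pi))).neg
  have he : (fun v => -phi v) = fun x => -(Real.exp (-x ^ 2 / 2) / Real.sqrt (2 * Real.pi)) := rfl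
  rw [he]
  simpa only [zero_div, neg_zero] using h3

lemma integral_mul_phi_Iic (Q : ℝ) : ∫ v in Set.Iic Q, v * phi v = -phi Q := by
  have := integral_Iic_of_hasDerivAt_of_tendsto'
    (f := fun x => -phi x) (f' := fun v => v * phi v) (a := Q)
    (fun x _ => hasDerivAt_neg_phi x) integrable_mul_phi.integrableOn tendsto_neg_phi_atBot
  simpa using this

lemma integral_comp_mul_add_Iic (g : ℝ → ℝ) {b : ℝ} (d t : ℝ) (hb : 0 < b) :
    (∫ s in Set.Iic t, g (b * s + d)) = b⁻¹ * ∫ v in Set.Iic (b * t + d), g v := by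
  rw [← integral_indicator measurableSet_Iic, ← integral_indicator measurableSet_Iic]
  have hind : (Set.Iic t).indicator (fun s => g (b * s + d))
      = fun s => (fun x => (Set.Iic (b * t + d)).indicator g (x + d)) (b * s) := by
    ext s
    by_cases h : s ≤ t
    · have h2 : b * s + d ≤ b * t + d := by nlinarith
      simp [Set.indicator_apply, h, h2]
    · have h2 : ¬ (b * s + d ≤ b * t + d) := by push_neg at h ⊢; nlinarith
      simp [Set.indicator_apply, h, h2]
  rw [hind,
    MeasureTheory.Measure.integral_comp_mul_left
      (fun x => (Set.Iic (b * t + d)).indicator g (x + d)) b,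
    integral_add_right_eq_self, smul_eq_mul, abs_of_pos (inv_pos.2 hb)]

theorem stmt_2 (a t p P Q : ℝ)
    (hP : P = (p - a * t) / Real.sqrt (1 + a ^ 2))
    (hQ : Q = (t + a * p) / Real.sqrt (1 + a ^ 2)) :
    ∫ s in Set.Iic t, phi (a * (s - t) + p) * phi s * (s - t) =
      -(phi P * (phi Q + Q * Phi Q)) / (1 + a ^ 2) := by
  set sc := Real.sqrt (1 + a ^ 2) with hsc_def
  have hpos : (0:ℝ) < 1 + a ^ 2 := by positivity
  have hsc : 0 < sc := Real.sqrt_pos.2 hpos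
  have hsq : sc ^ 2 = 1 + a ^ 2 := Real.sq_sqrt hpos.le
  have hPs : P * sc = p - a * t := by rw [hP]; field_simp
  have hQs : Q * sc = t + a * p := by rw [hQ]; field_simp
  have hQ' : sc * t + a * P = Q := by
    have h : (sc * t + a * P) * sc = Q * sc := by
      linear_combination t * hsq + a * hPs - hQs
    exact mul_right_cancel₀ hsc.ne' h
  have hpt : ∀ s, phi (a * (s - t) + p) * phi s * (s - t)
      = phi P * ((fun v => phi v * ((v - Q) / sc)) (sc * s + a * P)) := by
    intro s
    have harg : -(a * (s - t) + p) ^ 2 / 2 + -s ^ 2 / 2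
        = -P ^ 2 / 2 + -(sc * s + a * P) ^ 2 / 2 := by
      linear_combination ((s ^ 2 - P ^ 2) / 2) * hsq
        + ((2 * a * s + p - a * t + P * sc) / 2) * hPs
    have hst : (sc * s + a * P - Q) / sc = s - t := by
      rw [← hQ']; field_simp; ring
    simp only [hst]
    unfold phi
    rw [div_mul_div_comm, ← Real.exp_add, harg, Real.exp_add]
    ring
  rw [setIntegral_congr_fun measurableSet_Iic (fun s _ => hpt s), integral_const_mul,
    integral_comp_mul_add_Iic (fun v => phi v * ((v - Q) / sc)) (a * P) t hsc, hQ']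
  have hsplit : ∀ v : ℝ, phi v * ((v - Q) / sc) = sc⁻¹ * (v * phi v - Q * phi v) := by
    intro v; field_simp
  simp only [hsplit]
  rw [integral_const_mul, integral_sub integrable_mul_phi.integrableOn
      ((integrable_phi.const_mul Q).integrableOn), integral_const_mul,
    integral_mul_phi_Iic]
  show phi P * (sc⁻¹ * (sc⁻¹ * (-phi Q - Q * Phi Q))) = _
  have h2 : sc⁻¹ * sc⁻¹ = (1 + a ^ 2)⁻¹ := by
    rw [← hsq]; field_simp
  rw [show (1 + a ^ 2) = sc ^ 2 from hsq.symm]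
  field_simp
  ring
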